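/- Let L ∈ U(p,q) fix a point W_0 ∈ closure(D^I_{p,q}), i.e. L(W_0) = W_0 where the action extends continuously to the closure. Define ψ_{W_0}(W) = −log(|det(W_0* W − I_q)|^{-2} det(I_q − W*W)) on D^I_{p,q}. Then for all W ∈ D^I_{p,q}, ψ_{W_0}(L(W)) = ψ_{W_0}(W) + log|det(d − W_0* b)|^2, where L = [[a,b],[c,d]] in block form; in particular ψ_{W_0} is invariant up to an additive constant under the stabilizer of W_0. -/

import Mathlib

open Matrix ComplexOrder

set_option maxHeartbeats 1600000

/-- If `L = [[a,b],[c,d]] ∈ U(p,q)` fixes `W₀` in the closure of `D^I_{p,q}`, then the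
Kähler potential `ψ_{W₀}(W) = −log(|det(W₀ᴴW − I)|⁻² det(I − WᴴW))` satisfies
`ψ_{W₀}(L(W)) = ψ_{W₀}(W) + log |det(d − W₀ᴴ b)|²` for all `W ∈ D^I_{p,q}`. -/
theorem stmt4 (p q : ℕ)
    (a : Matrix (Fin p) (Fin p) ℂ) (b : Matrix (Fin p) (Fin q) ℂ)
    (c : Matrix (Fin q) (Fin p) ℂ) (d : Matrix (Fin q) (Fin q) ℂ)
    (hL : (Matrix.fromBlocks a b c d)ᴴ * Matrix.fromBlocks 1 0 0 (-1) *
        Matrix.fromBlocks a b c d = Matrix.fromBlocks 1 0 0 (-1))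
    (W₀ : Matrix (Fin p) (Fin q) ℂ) (hW₀ : (1 - W₀ᴴ * W₀).PosSemidef)
    (hfix : (a * W₀ + b) * (c * W₀ + d)⁻¹ = W₀)
    (W : Matrix (Fin p) (Fin q) ℂ) (hW : (1 - Wᴴ * W).PosDef)
    (ψ : Matrix (Fin p) (Fin q) ℂ → ℝ)
    (hψ : ∀ V, ψ V =
      - Real.log ((‖(W₀ᴴ * V - 1).det‖ ^ 2)⁻¹ * ((1 - Vᴴ * V).det).re)) :
    ψ ((a * W + b) * (c * W + d)⁻¹) = ψ W + Real.log (‖(d - W₀ᴴ * b).det‖ ^ 2) := by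
  classical
  -- Step 1: block relations from `L ∈ U(p,q)`
  have hL' := hL
  rw [Matrix.fromBlocks_conjTranspose, Matrix.fromBlocks_multiply,
    Matrix.fromBlocks_multiply] at hL'
  simp only [Matrix.mul_one, Matrix.mul_zero, zero_add, add_zero, Matrix.neg_mul] at hL'
  rw [Matrix.fromBlocks_inj] at hL'
  obtain ⟨h11, h12, h21, h22⟩ := hL'
  have ea : aᴴ*a - cᴴ*c = 1 := by simpa [sub_eq_add_neg] using h11
  have eb : aᴴ*b = cᴴ*d := sub_eq_zero.mp (by simpa [sub_eq_add_neg] using h12)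
  have ec : bᴴ*a = dᴴ*c := sub_eq_zero.mp (by simpa [sub_eq_add_neg] using h21)
  have ed' : bᴴ*b - dᴴ*d = -1 := by simpa [sub_eq_add_neg] using h22
  have ed : dᴴ*d = 1 + bᴴ*b := by
    rw [← sub_eq_zero, show dᴴ*d - (1 + bᴴ*b) = -((bᴴ*b - dᴴ*d) - (-1)) from by noncomm_ring,
      ed']
    simp
  -- Step 2: d is invertible
  have hdd : (dᴴ*d).PosDef := by
    rw [ed]
    exact Matrix.PosDef.add_posSemidef Matrix.PosDef.one
      (Matrix.posSemidef_conjTranspose_mul_self b)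
  have hd : d.det ≠ 0 := by
    intro h0
    have := hdd.det_pos.ne'
    rw [Matrix.det_mul, Matrix.det_conjTranspose, h0] at this
    simp at this
  -- Step 3: c*W₀+d is invertible
  have hK₀ : IsUnit (c*W₀+d).det := by
    by_cases h : IsUnit (c*W₀+d).det
    · exact h
    · exfalso
      have h0 : (c*W₀+d)⁻¹ = 0 := Matrix.nonsing_inv_apply_not_isUnit _ h
      rw [h0, Matrix.mul_zero] at hfix
      apply h
      rw [← hfix]
      simpa using hd.isUnit
  have hfix' : a * W₀ + b = W₀ * (c*W₀+d) := by
    calc a*W₀+b = ((a*W₀+b) * (c*W₀+d)⁻¹) * (c*W₀+d) := by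
          rw [Matrix.mul_assoc, Matrix.nonsing_inv_mul _ hK₀, Matrix.mul_one]
    _ = W₀ * (c*W₀+d) := by rw [hfix]
  have hfix0 : W₀*(c*W₀+d) - (a*W₀+b) = 0 := by rw [hfix']; exact sub_self _
  have ec0 : dᴴ*c - bᴴ*a = 0 := by rw [ec]; exact sub_self _
  have ed0 : dᴴ*d - (1 + bᴴ*b) = 0 := by rw [ed]; exact sub_self _
  have eb0 : aᴴ*b - cᴴ*d = 0 := by rw [eb]; exact sub_self _
  -- Step 4: (dᴴ - bᴴW₀) is a left inverse of c*W₀+d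
  have h5 : (dᴴ - bᴴ*W₀) * (c*W₀+d) = 1 := by
    have e : (dᴴ - bᴴ*W₀) * (c*W₀+d) - 1
        = (dᴴ*c - bᴴ*a)*W₀ + (dᴴ*d - (1 + bᴴ*b)) - bᴴ*(W₀*(c*W₀+d) - (a*W₀+b)) := by
      simp only [Matrix.mul_add, Matrix.add_mul, Matrix.sub_mul, Matrix.mul_sub,
        Matrix.mul_assoc]
      abel
    rw [ec0, ed0, hfix0] at e
    simp only [Matrix.zero_mul, Matrix.mul_zero, add_zero, zero_add, sub_zero, sub_self] at e
    exact sub_eq_zero.mp e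
  have hK₀inv : (c*W₀+d)⁻¹ = dᴴ - bᴴ*W₀ := Matrix.inv_eq_left_inv h5
  -- Step 5: (aᴴW₀ - cᴴ)(cW₀+d) = W₀
  have h6 : (aᴴ*W₀ - cᴴ) * (c*W₀+d) = W₀ := by
    have e : (aᴴ*W₀ - cᴴ) * (c*W₀+d) - W₀
        = aᴴ*(W₀*(c*W₀+d) - (a*W₀+b)) + (aᴴ*a - cᴴ*c)*W₀ - W₀ + (aᴴ*b - cᴴ*d) := by
      simp only [Matrix.mul_add, Matrix.add_mul, Matrix.sub_mul, Matrix.mul_sub,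
        Matrix.mul_assoc]
      abel
    rw [hfix0, eb0, ea] at e
    simp only [Matrix.zero_mul, Matrix.mul_zero, Matrix.one_mul, add_zero, zero_add,
      sub_zero, sub_self] at e
    exact sub_eq_zero.mp e
  have h7 : aᴴ*W₀ - cᴴ = W₀ * (dᴴ - bᴴ*W₀) := by
    rw [← hK₀inv]
    calc aᴴ*W₀ - cᴴ = ((aᴴ*W₀-cᴴ)*(c*W₀+d))*(c*W₀+d)⁻¹ := by
          rw [Matrix.mul_assoc, Matrix.mul_nonsing_inv _ hK₀, Matrix.mul_one]
    _ = W₀ * (c*W₀+d)⁻¹ := by rw [h6]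
  have h8 : W₀ᴴ*a - c = (d - W₀ᴴ*b)*W₀ᴴ := by
    have h := congrArg conjTranspose h7
    simpa [conjTranspose_sub, conjTranspose_mul] using h
  have h5' : (c*W₀+d)ᴴ * (d - W₀ᴴ*b) = 1 := by
    have h := congrArg conjTranspose h5
    simpa [conjTranspose_sub, conjTranspose_mul] using h
  have hα : (d - W₀ᴴ*b).det ≠ 0 := by
    intro h0
    have := congrArg Matrix.det h5'
    rw [Matrix.det_mul, h0, mul_zero, Matrix.det_one] at this
    simp at this
  -- Step 6: c*W+d is invertible
  have hNN : (c*W+d)ᴴ*(c*W+d) = (a*W+b)ᴴ*(a*W+b) + (1 - Wᴴ*W) := by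
    have e : (c*W+d)ᴴ*(c*W+d) - ((a*W+b)ᴴ*(a*W+b) + (1 - Wᴴ*W))
        = Wᴴ*(((cᴴ*c - aᴴ*a) + 1)*W) + Wᴴ*(cᴴ*d - aᴴ*b) + (dᴴ*c - bᴴ*a)*W
          + (dᴴ*d - (1 + bᴴ*b)) := by
      simp only [conjTranspose_add, conjTranspose_mul, Matrix.mul_add, Matrix.add_mul,
        Matrix.sub_mul, Matrix.mul_sub, Matrix.mul_assoc, Matrix.one_mul, Matrix.mul_one]
      abel
    have ea0 : (cᴴ*c - aᴴ*a) + 1 = 0 := by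
      rw [show cᴴ*c - aᴴ*a = -(aᴴ*a - cᴴ*c) from by abel, ea]
      simp
    have eb0' : cᴴ*d - aᴴ*b = 0 := by rw [eb]; exact sub_self _
    rw [ea0, eb0', ec0, ed0] at e
    simp only [Matrix.zero_mul, Matrix.mul_zero, add_zero, zero_add, sub_zero, sub_self] at e
    exact sub_eq_zero.mp e
  have hNpd : ((c*W+d)ᴴ*(c*W+d)).PosDef := by
    rw [hNN]
    exact Matrix.PosDef.posSemidef_add (Matrix.posSemidef_conjTranspose_mul_self _) hW
  have hν : (c*W+d).det ≠ 0 := by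
    intro h0
    have := hNpd.det_pos.ne'
    rw [Matrix.det_mul, Matrix.det_conjTranspose, h0] at this
    simp at this
  have hN : IsUnit (c*W+d).det := isUnit_iff_ne_zero.mpr hν
  -- Step 7: key identities
  have hnum : W₀ᴴ*(a*W+b) - (c*W+d) = (d - W₀ᴴ*b)*(W₀ᴴ*W - 1) := by
    have e : W₀ᴴ*(a*W+b) - (c*W+d) - (d - W₀ᴴ*b)*(W₀ᴴ*W - 1)
        = ((W₀ᴴ*a - c) - (d - W₀ᴴ*b)*W₀ᴴ)*W := by
      simp only [Matrix.mul_add, Matrix.add_mul, Matrix.sub_mul, Matrix.mul_sub,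
        Matrix.mul_assoc, Matrix.mul_one, Matrix.one_mul]
      abel
    have h80 : (W₀ᴴ*a - c) - (d - W₀ᴴ*b)*W₀ᴴ = 0 := by rw [h8]; exact sub_self _
    rw [h80, Matrix.zero_mul] at e
    exact sub_eq_zero.mp e
  have key1 : W₀ᴴ*((a*W+b)*(c*W+d)⁻¹) - 1 = ((d - W₀ᴴ*b)*(W₀ᴴ*W - 1))*(c*W+d)⁻¹ := by
    have e : W₀ᴴ*((a*W+b)*(c*W+d)⁻¹) - 1 = (W₀ᴴ*(a*W+b) - (c*W+d))*(c*W+d)⁻¹ := by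
      rw [Matrix.sub_mul, Matrix.mul_assoc, Matrix.mul_nonsing_inv _ hN]
    rw [e, hnum]
  have key2 : 1 - ((a*W+b)*(c*W+d)⁻¹)ᴴ*((a*W+b)*(c*W+d)⁻¹)
      = ((c*W+d)⁻¹)ᴴ*(1 - Wᴴ*W)*(c*W+d)⁻¹ := by
    have hinv1 : (c*W+d)*(c*W+d)⁻¹ = 1 := Matrix.mul_nonsing_inv _ hN
    have hNN' : (1 : Matrix (Fin q) (Fin q) ℂ) - Wᴴ*W
        = (c*W+d)ᴴ*(c*W+d) - (a*W+b)ᴴ*(a*W+b) := by rw [hNN]; abel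
    rw [hNN', Matrix.mul_sub, Matrix.sub_mul]
    have t1 : (((c*W+d)⁻¹)ᴴ*((c*W+d)ᴴ*(c*W+d)))*(c*W+d)⁻¹ = 1 := by
      rw [show ((c*W+d)⁻¹)ᴴ*((c*W+d)ᴴ*(c*W+d)) = (((c*W+d)*(c*W+d)⁻¹)ᴴ)*(c*W+d) from by
        rw [conjTranspose_mul, Matrix.mul_assoc], hinv1, conjTranspose_one, Matrix.one_mul,
        hinv1]
    have t2 : (((c*W+d)⁻¹)ᴴ*((a*W+b)ᴴ*(a*W+b)))*(c*W+d)⁻¹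
        = ((a*W+b)*(c*W+d)⁻¹)ᴴ*((a*W+b)*(c*W+d)⁻¹) := by
      simp only [conjTranspose_mul, Matrix.mul_assoc]
    rw [t1, t2]
  -- Step 8: determinants
  have detkey1 : (W₀ᴴ*((a*W+b)*(c*W+d)⁻¹) - 1).det
      = (d - W₀ᴴ*b).det * (W₀ᴴ*W - 1).det * ((c*W+d).det)⁻¹ := by
    rw [key1, Matrix.det_mul, Matrix.det_mul, Matrix.det_nonsing_inv, Ring.inverse_eq_inv]
  have detkey2 : (1 - ((a*W+b)*(c*W+d)⁻¹)ᴴ*((a*W+b)*(c*W+d)⁻¹)).det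
      = star (((c*W+d).det)⁻¹) * (1-Wᴴ*W).det * ((c*W+d).det)⁻¹ := by
    rw [key2, Matrix.det_mul, Matrix.det_mul, Matrix.det_conjTranspose,
      Matrix.det_nonsing_inv, Ring.inverse_eq_inv]
  -- Step 9: 1 - W₀ᴴW is invertible
  have hβ : (W₀ᴴ*W - 1).det ≠ 0 := by
    intro h0
    obtain ⟨x, hx0, hx⟩ := Matrix.exists_mulVec_eq_zero_iff.mpr h0
    rw [Matrix.sub_mulVec, Matrix.one_mulVec, sub_eq_zero] at hx
    have hxx : W₀ᴴ *ᵥ (W *ᵥ x) = x := by rw [Matrix.mulVec_mulVec]; exact hx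
    have hs : (0:ℂ) < star x ⬝ᵥ x := Matrix.dotProduct_star_self_pos_iff.mpr hx0
    have hsim : star (star x ⬝ᵥ x) = star x ⬝ᵥ x := by
      have h := hs
      rw [Complex.lt_def] at h
      apply Complex.ext
      · simp
      · simp [← h.2]
    have hcross : star (W₀ *ᵥ x) ⬝ᵥ (W *ᵥ x) = star x ⬝ᵥ x := by
      rw [Matrix.star_mulVec, ← Matrix.dotProduct_mulVec, hxx]
    have hcross' : star (W *ᵥ x) ⬝ᵥ (W₀ *ᵥ x) = star x ⬝ᵥ x := by
      rw [Matrix.star_dotProduct, hcross, hsim]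
    have hbound0 : star (W₀ *ᵥ x) ⬝ᵥ (W₀ *ᵥ x) ≤ star x ⬝ᵥ x := by
      have h := hW₀.dotProduct_mulVec_nonneg x
      rw [Matrix.sub_mulVec, Matrix.one_mulVec, dotProduct_sub,
        ← Matrix.mulVec_mulVec, Matrix.dotProduct_mulVec, ← Matrix.star_mulVec] at h
      exact sub_nonneg.mp h
    have hbound1 : star (W *ᵥ x) ⬝ᵥ (W *ᵥ x) < star x ⬝ᵥ x := by
      have h := hW.dotProduct_mulVec_pos hx0
      rw [Matrix.sub_mulVec, Matrix.one_mulVec, dotProduct_sub,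
        ← Matrix.mulVec_mulVec, Matrix.dotProduct_mulVec, ← Matrix.star_mulVec] at h
      exact sub_pos.mp h
    have hz := dotProduct_star_self_nonneg (W₀ *ᵥ x - W *ᵥ x)
    rw [star_sub, sub_dotProduct, dotProduct_sub, dotProduct_sub,
      hcross, hcross'] at hz
    have hcontra : star x ⬝ᵥ x + star x ⬝ᵥ x < star x ⬝ᵥ x + star x ⬝ᵥ x := by
      calc star x ⬝ᵥ x + star x ⬝ᵥ x
          ≤ star (W₀ *ᵥ x) ⬝ᵥ (W₀ *ᵥ x) + star (W *ᵥ x) ⬝ᵥ (W *ᵥ x) :=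
            sub_le_sub_iff.mp (sub_nonneg.mp hz)
        _ < star x ⬝ᵥ x + star x ⬝ᵥ x := add_lt_add_of_le_of_lt hbound0 hbound1
    exact absurd hcontra (lt_irrefl _)
  -- Step 10: positivity of det(1 - WᴴW)
  have hδlt := hW.det_pos
  rw [Complex.lt_def] at hδlt
  have hδre : 0 < ((1 - Wᴴ*W).det).re := by simpa using hδlt.1
  have hδim : ((1 - Wᴴ*W).det).im = 0 := by simpa using hδlt.2.symm
  have hδ : (1 - Wᴴ*W).det = ((((1 - Wᴴ*W).det).re : ℝ) : ℂ) := by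
    apply Complex.ext
    · simp
    · simp [hδim]
  -- Step 11: real-part computation
  have hνsq : ((c*W+d).det) * star ((c*W+d).det)
      = ((‖(c*W+d).det‖ ^ 2 : ℝ) : ℂ) := by
    rw [Complex.star_def, Complex.mul_conj, Complex.sq_norm]
  have hre : (star (((c*W+d).det)⁻¹) * (1-Wᴴ*W).det * ((c*W+d).det)⁻¹).re
      = (((1 - Wᴴ*W).det).re) * ((‖(c*W+d).det‖ ^ 2))⁻¹ := by
    have e : star (((c*W+d).det)⁻¹) * (1-Wᴴ*W).det * ((c*W+d).det)⁻¹
        = ((((1 - Wᴴ*W).det).re : ℝ) : ℂ) * (((‖(c*W+d).det‖ ^ 2 : ℝ)) : ℂ)⁻¹ := by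
      rw [← hδ, ← hνsq, Complex.star_def, map_inv₀]
      ring
    rw [e, ← Complex.ofReal_inv, ← Complex.ofReal_mul, Complex.ofReal_re]
  have habs : ‖(d - W₀ᴴ*b).det * (W₀ᴴ*W - 1).det * ((c*W+d).det)⁻¹‖
      = ‖(d - W₀ᴴ*b).det‖ * ‖(W₀ᴴ*W - 1).det‖
        * (‖(c*W+d).det‖)⁻¹ := by
    simp [_root_.map_mul, map_inv₀]
  -- Step 12: final computation with logarithms
  rw [hψ, hψ, detkey1, detkey2, hre, habs]
  have hA : ‖(d - W₀ᴴ*b).det‖ ≠ 0 := norm_ne_zero_iff.mpr hα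
  have hB : ‖(W₀ᴴ*W - 1).det‖ ≠ 0 := norm_ne_zero_iff.mpr hβ
  have hNn : ‖(c*W+d).det‖ ≠ 0 := norm_ne_zero_iff.mpr hν
  set A := ‖(d - W₀ᴴ*b).det‖ with hAdef
  set Bb := ‖(W₀ᴴ*W - 1).det‖ with hBdef
  set Nn := ‖(c*W+d).det‖ with hNdef
  set D := ((1 - Wᴴ*W).det).re with hDdef
  have harg : ((A*Bb*Nn⁻¹)^2)⁻¹ * (D * ((Nn^2))⁻¹) = (A^2)⁻¹ * ((Bb^2)⁻¹ * D) := by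
    field_simp
  rw [harg, Real.log_mul (inv_ne_zero (pow_ne_zero 2 hA))
    (mul_ne_zero (inv_ne_zero (pow_ne_zero 2 hB)) hδre.ne'), Real.log_inv]
  ring
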